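/- Let A ∈ R^{n×p} be an arbitrary matrix with n < p, and let x ∈ R^p be arbitrary. Then there exists a nonzero vector x̃ ∈ R^p with A x̃ = A x and s(x̃) ≥ (p − n)/(1 + 2√(2 log(2p)))². -/

import Mathlib

set_option maxHeartbeats 1000000

open Matrix


noncomputable def sg {p : ℕ} (b : Fin p → Bool) (i : Fin p) : ℝ := if b i then 1 else -1

lemma sg_sq {p : ℕ} (b : Fin p → Bool) (i : Fin p) : sg b i * sg b i = 1 := by
  unfold sg; by_cases h : b i <;> simp [h]

lemma sign_orth {p : ℕ} (i i' : Fin p) (h : i ≠ i') :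
    ∑ b : Fin p → Bool, sg b i * sg b i' = 0 := by
  refine Finset.sum_involution (fun b _ => Function.update b i (!(b i))) ?_ ?_ ?_ ?_
  · intro b _
    beta_reduce
    unfold sg
    rw [Function.update_self, Function.update_of_ne (Ne.symm h)]
    by_cases hb : b i <;> by_cases hb' : b i' <;> simp [hb, hb'] <;> ring
  · intro b _ _ hc
    beta_reduce at hc
    have := congrFun hc i
    rw [Function.update_self] at this
    simp at this
  · intro b _; exact Finset.mem_univ _
  · intro b _
    beta_reduce
    funext j
    by_cases hj : j = i
    · subst hj; simp [Function.update_self]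
    · simp [Function.update_of_ne hj]


lemma sign_sum_sq {p : ℕ} (v : Fin p → ℝ) :
    ∑ b : Fin p → Bool, (∑ i, v i * sg b i) ^ 2 = 2 ^ p * ∑ i, (v i) ^ 2 := by
  have expand : ∀ b : Fin p → Bool, (∑ i, v i * sg b i) ^ 2
      = ∑ i, ∑ i', (v i * v i') * (sg b i * sg b i') := by
    intro b
    rw [sq, Finset.sum_mul_sum]
    congr 1; funext i; congr 1; funext i'; ring
  simp_rw [expand]
  rw [Finset.sum_comm]
  have key : ∀ i : Fin p, ∑ b : Fin p → Bool, ∑ i', (v i * v i') * (sg b i * sg b i')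
      = 2 ^ p * v i ^ 2 := by
    intro i
    rw [Finset.sum_comm]
    have h2 : ∀ i' : Fin p, ∑ b : Fin p → Bool, (v i * v i') * (sg b i * sg b i')
        = if i' = i then 2 ^ p * v i ^ 2 else 0 := by
      intro i'
      by_cases hii : i' = i
      · subst hii
        simp_rw [sg_sq, mul_one]
        rw [Finset.sum_const]
        simp [Finset.card_univ, sq]

      · rw [← Finset.mul_sum, sign_orth i i' (fun hc => hii hc.symm), mul_zero]
        simp [hii]
    simp_rw [h2]
    simp
  simp_rw [key]
  rw [← Finset.mul_sum]



lemma basis_exists (n p : ℕ) (hnp : n < p) (A : Matrix (Fin n) (Fin p) ℝ) :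
    ∃ (k : ℕ) (B : Fin k → Fin p → ℝ), p ≤ k + n ∧
      (∀ j l, (∑ i, B j i * B l i) = if j = l then (1:ℝ) else 0) ∧
      (∀ j, A.mulVec (B j) = 0) := by
  set T : EuclideanSpace ℝ (Fin p) →ₗ[ℝ] (Fin n → ℝ) :=
    A.mulVecLin ∘ₗ (WithLp.linearEquiv 2 ℝ (Fin p → ℝ)).toLinearMap with hT
  set K : Submodule ℝ (EuclideanSpace ℝ (Fin p)) := LinearMap.ker T with hK
  have f := stdOrthonormalBasis ℝ K
  refine ⟨Module.finrank ℝ K, fun j => WithLp.equiv 2 (Fin p → ℝ) ((f j : K) : EuclideanSpace ℝ (Fin p)), ?_, ?_, ?_⟩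
  · have h1 := LinearMap.finrank_range_add_finrank_ker T
    have h2 : Module.finrank ℝ (LinearMap.range T) ≤ n := by
      have := Submodule.finrank_le (LinearMap.range T)
      simpa using this
    have h3 : Module.finrank ℝ (EuclideanSpace ℝ (Fin p)) = p := finrank_euclideanSpace_fin
    rw [← hK] at h1
    omega
  · intro j l
    have horm := f.orthonormal
    rw [orthonormal_iff_ite] at horm
    have h := horm j l
    rw [Submodule.coe_inner, PiLp.inner_apply] at h
    rw [← h]
    exact Finset.sum_congr rfl fun i _ => by simp [mul_comm]
  · intro j
    have hm : T ((f j : K) : EuclideanSpace ℝ (Fin p)) = 0 := (f j).2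
    rw [hT] at hm
    simp only [LinearMap.comp_apply, LinearEquiv.coe_coe, WithLp.linearEquiv_apply,
      Matrix.mulVecLin_apply] at hm
    beta_reduce
    exact hm



lemma core (n p : ℕ) (hnp : n < p) (A : Matrix (Fin n) (Fin p) ℝ) :
    ∃ u : Fin p → ℝ, A.mulVec u = 0 ∧ 0 < ∑ i, (u i)^2 ∧
      ((p:ℝ) - n) * (∑ i, (u i)^2) ≤ (∑ i, |u i|)^2 := by
  obtain ⟨k, B, hrank, horth, hker⟩ := basis_exists n p hnp A
  have hk1 : 1 ≤ k := by omega
  set c : Fin k → (Fin p → Bool) → ℝ := fun j b => ∑ i, B j i * sg b i with hc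
  set u : (Fin p → Bool) → Fin p → ℝ := fun b i => ∑ j, c j b * B j i with hu
  set Q : (Fin p → Bool) → ℝ := fun b => ∑ j, (c j b)^2 with hQ
  set L1 : (Fin p → Bool) → ℝ := fun b => ∑ i, |u b i| with hL1
  have hQ0 : ∀ b, 0 ≤ Q b := fun b => Finset.sum_nonneg fun j _ => sq_nonneg _
  -- (2) ℓ2 norm of u b
  have hQ2 : ∀ b, ∑ i, (u b i)^2 = Q b := by
    intro b
    have : ∀ i, (u b i)^2 = ∑ j, ∑ l, (c j b * c l b) * (B j i * B l i) := by
      intro i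
      rw [hu, sq, Finset.sum_mul_sum]
      exact Finset.sum_congr rfl fun j _ => Finset.sum_congr rfl fun l _ => by ring
    simp_rw [this]
    rw [Finset.sum_comm]
    have : ∀ j, ∑ i, ∑ l, (c j b * c l b) * (B j i * B l i) = (c j b)^2 := by
      intro j
      rw [Finset.sum_comm]
      have inner : ∀ l, ∑ i, (c j b * c l b) * (B j i * B l i)
          = if j = l then (c j b)^2 else 0 := by
        intro l
        rw [← Finset.mul_sum, horth j l]
        by_cases h : j = l
        · subst h; simp [sq]
        · simp [h]
      simp_rw [inner]
      simp
    simp_rw [this]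
    rfl
  -- (1) inner with sign vector
  have hQ1 : ∀ b, ∑ i, u b i * sg b i = Q b := by
    intro b
    rw [hQ]
    have : ∀ i, u b i * sg b i = ∑ j, c j b * (B j i * sg b i) := by
      intro i
      rw [hu, Finset.sum_mul]
      exact Finset.sum_congr rfl fun j _ => by ring
    simp_rw [this]
    rw [Finset.sum_comm]
    refine Finset.sum_congr rfl fun j _ => ?_
    rw [← Finset.mul_sum]
    have hcd : (∑ i, B j i * sg b i) = c j b := rfl
    rw [hcd, sq]
  -- (4) Q b ≤ L1 b
  have hQL : ∀ b, Q b ≤ L1 b := by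
    intro b
    rw [← hQ1 b, hL1]
    apply Finset.sum_le_sum
    intro i _
    calc u b i * sg b i ≤ |u b i * sg b i| := le_abs_self _
      _ = |u b i| := by rw [abs_mul]; unfold sg; by_cases h : b i <;> simp [h]
  -- (3) total
  have htot : ∑ b : Fin p → Bool, Q b = 2^p * k := by
    rw [hQ, Finset.sum_comm]
    have : ∀ j, ∑ b : Fin p → Bool, (c j b)^2 = 2^p := by
      intro j
      rw [hc]
      beta_reduce
      rw [sign_sum_sq (B j)]
      have h1 : ∑ i, B j i ^ 2 = 1 := by simpa [sq] using horth j j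
      rw [h1, mul_one]
    simp_rw [this]
    simp [mul_comm]
  -- (5) sum of sqrt Q
  have hsq : ∑ b : Fin p → Bool, Real.sqrt (Q b) ≤ 2^p * Real.sqrt k := by
    have cs := Finset.sum_mul_sq_le_sq_mul_sq Finset.univ
      (fun b : Fin p → Bool => Real.sqrt (Q b)) (fun _ => 1)
    simp only [mul_one, one_pow] at cs
    have h1 : ∑ b : Fin p → Bool, Real.sqrt (Q b) ^ 2 = 2^p * k := by
      rw [← htot]
      exact Finset.sum_congr rfl fun b _ => Real.sq_sqrt (hQ0 b)
    have h2 : ∑ _b : Fin p → Bool, (1:ℝ) = 2^p := by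
      simp [Finset.card_univ]
    rw [h1, h2] at cs
    have hnn : (0:ℝ) ≤ ∑ b : Fin p → Bool, Real.sqrt (Q b) :=
      Finset.sum_nonneg fun b _ => Real.sqrt_nonneg _
    have h3 := Real.sqrt_le_sqrt cs
    rw [Real.sqrt_sq hnn] at h3
    calc ∑ b : Fin p → Bool, Real.sqrt (Q b) ≤ Real.sqrt (2^p * k * 2^p) := h3
      _ = 2^p * Real.sqrt k := by
          rw [show (2:ℝ)^p * k * 2^p = ((2:ℝ)^p)^2 * k by ring,
            Real.sqrt_mul (sq_nonneg _), Real.sqrt_sq (by positivity)]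
  -- existence of a good sign pattern
  have hkR : (1:ℝ) ≤ (k:ℝ) := by exact_mod_cast hk1
  have hex : ∃ b, 0 < Q b ∧ Real.sqrt k * Real.sqrt (Q b) ≤ L1 b := by
    by_contra hcon
    push_neg at hcon
    have hL1le : ∀ b, L1 b ≤ Real.sqrt k * Real.sqrt (Q b) := by
      intro b
      rcases eq_or_lt_of_le (hQ0 b) with h | h
      · have hz : ∀ i, u b i = 0 := by
          have hs : ∑ i, (u b i)^2 = 0 := by rw [hQ2 b, ← h]
          intro i
          have := (Finset.sum_eq_zero_iff_of_nonneg
            (fun i _ => sq_nonneg (u b i))).1 hs i (Finset.mem_univ i)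
          exact pow_eq_zero_iff two_ne_zero |>.1 this
        have : L1 b = 0 := by
          rw [hL1]; beta_reduce
          exact Finset.sum_eq_zero fun i _ => by rw [hz i, abs_zero]
        rw [this, ← h]
        simp
      · exact (hcon b h).le
    have hb0 : ∃ b0, 0 < Q b0 := by
      by_contra hall
      push_neg at hall
      have h0 : ∑ b : Fin p → Bool, Q b ≤ 0 := Finset.sum_nonpos fun b _ => hall b
      rw [htot] at h0
      have h2 : (0:ℝ) < 2^p := by positivity
      nlinarith
    obtain ⟨b0, hb0⟩ := hb0
    have hstrict : ∑ b : Fin p → Bool, L1 b < ∑ b : Fin p → Bool, Real.sqrt k * Real.sqrt (Q b) :=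
      Finset.sum_lt_sum (fun b _ => hL1le b) ⟨b0, Finset.mem_univ b0, hcon b0 hb0⟩
    have hc1 : (2:ℝ)^p * k ≤ ∑ b : Fin p → Bool, L1 b := by
      rw [← htot]
      exact Finset.sum_le_sum fun b _ => hQL b
    have hc2 : ∑ b : Fin p → Bool, Real.sqrt k * Real.sqrt (Q b) ≤ 2^p * k := by
      rw [← Finset.mul_sum]
      calc Real.sqrt k * ∑ b : Fin p → Bool, Real.sqrt (Q b)
          ≤ Real.sqrt k * (2^p * Real.sqrt k) := by
            apply mul_le_mul_of_nonneg_left hsq (Real.sqrt_nonneg _)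
        _ = 2^p * (Real.sqrt k * Real.sqrt k) := by ring
        _ = 2^p * k := by rw [Real.mul_self_sqrt (by positivity)]
    linarith
  obtain ⟨b, hQpos, hineq⟩ := hex
  refine ⟨u b, ?_, ?_, ?_⟩
  · have hsum : u b = ∑ j, c j b • B j := by
      funext i
      simp [hu, Finset.sum_apply]
    rw [hsum, ← Matrix.mulVecLin_apply, map_sum]
    refine Finset.sum_eq_zero fun j _ => ?_
    rw [_root_.map_smul, Matrix.mulVecLin_apply, hker j, smul_zero]
  · rw [hQ2 b]; exact hQpos
  · have hsq2 : (Real.sqrt k * Real.sqrt (Q b)) * (Real.sqrt k * Real.sqrt (Q b))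
        ≤ L1 b * L1 b :=
      mul_self_le_mul_self (by positivity) hineq
    rw [show (Real.sqrt k * Real.sqrt (Q b)) * (Real.sqrt k * Real.sqrt (Q b))
        = (Real.sqrt k * Real.sqrt k) * (Real.sqrt (Q b) * Real.sqrt (Q b)) by ring,
      Real.mul_self_sqrt (by positivity), Real.mul_self_sqrt (hQ0 b)] at hsq2
    have hpn : ((p:ℝ) - n) ≤ (k:ℝ) := by
      have : (p:ℝ) ≤ (k:ℝ) + (n:ℝ) := by exact_mod_cast hrank
      linarith
    rw [hQ2 b]
    have hL1b : (∑ i, |u b i|) = L1 b := rfl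
    rw [hL1b, sq]
    nlinarith [hQ0 b]



theorem exists_dense_vector_same_measurements (n p : ℕ) (hnp : n < p)
    (A : Matrix (Fin n) (Fin p) ℝ) (x : Fin p → ℝ) :
    ∃ xt : Fin p → ℝ, xt ≠ 0 ∧ A.mulVec xt = A.mulVec x ∧
      ((p : ℝ) - n) / (1 + 2 * Real.sqrt (2 * Real.log (2 * p))) ^ 2 ≤
        (∑ i, |xt i|) ^ 2 / (∑ i, (xt i) ^ 2) := by
  obtain ⟨u, hu0, hQpos, hudense⟩ := core n p hnp A
  have hp1 : 1 ≤ p := by omega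
  set D : ℝ := 1 + 2 * Real.sqrt (2 * Real.log (2 * p)) with hD
  have hD1 : 1 < D := by
    have hlog : 0 < Real.log (2 * p) := by
      apply Real.log_pos
      have : (1:ℝ) ≤ (p:ℝ) := by exact_mod_cast hp1
      linarith
    have : 0 < Real.sqrt (2 * Real.log (2 * p)) := Real.sqrt_pos.2 (by linarith)
    rw [hD]; linarith
  have hD0 : 0 < D := by linarith
  have hpn : (0:ℝ) < (p:ℝ) - n := by
    have : (n:ℝ) < p := by exact_mod_cast hnp
    linarith
  set Bd : ℝ := ((p:ℝ) - n) / D ^ 2 with hBd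
  have hBpos : 0 < Bd := by positivity
  set sB : ℝ := Real.sqrt Bd with hsB
  have hsB0 : 0 ≤ sB := Real.sqrt_nonneg _
  have hsBsq : sB ^ 2 = Bd := Real.sq_sqrt hBpos.le
  have hsBval : sB = Real.sqrt ((p:ℝ) - n) / D := by
    rw [hsB, hBd, Real.sqrt_div hpn.le, Real.sqrt_sq hD0.le]
  set a1 : ℝ := ∑ i, |x i| with ha1
  set a2 : ℝ := Real.sqrt (∑ i, (x i)^2) with ha2
  set b1 : ℝ := ∑ i, |u i| with hb1
  set b2 : ℝ := Real.sqrt (∑ i, (u i)^2) with hb2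
  have ha1n : 0 ≤ a1 := Finset.sum_nonneg fun i _ => abs_nonneg _
  have ha2n : 0 ≤ a2 := Real.sqrt_nonneg _
  have hb1n : 0 ≤ b1 := Finset.sum_nonneg fun i _ => abs_nonneg _
  have hb2p : 0 < b2 := Real.sqrt_pos.2 hQpos
  have hb2sq : b2 ^ 2 = ∑ i, (u i)^2 := Real.sq_sqrt hQpos.le
  have ha2sq : a2 ^ 2 = ∑ i, (x i)^2 := Real.sq_sqrt (Finset.sum_nonneg fun i _ => sq_nonneg _)
  -- b1 ≥ √(p-n) * b2
  have hb1big : Real.sqrt ((p:ℝ) - n) * b2 ≤ b1 := by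
    have h1 : (Real.sqrt ((p:ℝ) - n) * b2) ^ 2 ≤ b1 ^ 2 := by
      rw [mul_pow, Real.sq_sqrt hpn.le, hb2sq]
      exact hudense
    nlinarith [Real.sqrt_nonneg ((p:ℝ) - n), hb2p.le]
  -- gap
  have hgap : 0 < b1 - sB * b2 := by
    have h1 : sB * b2 < Real.sqrt ((p:ℝ) - n) * b2 := by
      rw [hsBval]
      have hs : 0 < Real.sqrt ((p:ℝ) - n) := Real.sqrt_pos.2 hpn
      rw [div_mul_eq_mul_div, div_lt_iff₀ hD0]
      nlinarith [mul_pos hs hb2p]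
    linarith
  set t : ℝ := (a1 + sB * a2 + 1) / (b1 - sB * b2) with ht
  have htpos : 0 < t := by
    apply div_pos
    · nlinarith
    · exact hgap
  have hkey : t * (b1 - sB * b2) = a1 + sB * a2 + 1 := by
    rw [ht, div_mul_cancel₀]
    exact ne_of_gt hgap
  set xt : Fin p → ℝ := fun i => x i + t * u i with hxt
  have hL1low : sB * (a2 + t * b2) + 1 ≤ ∑ i, |xt i| := by
    have hpt : ∀ i, t * |u i| - |x i| ≤ |xt i| := by
      intro i
      rw [hxt]
      have h : |t * u i| - |x i| ≤ |x i + t * u i| := by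
        have h := abs_sub_abs_le_abs_sub (t * u i) (-(x i))
        rw [abs_neg, sub_neg_eq_add] at h
        rw [show t * u i + x i = x i + t * u i from by ring] at h
        exact h
      rw [abs_mul, abs_of_nonneg htpos.le] at h
      exact h
    have hsum : t * b1 - a1 ≤ ∑ i, |xt i| := by
      have := Finset.sum_le_sum fun i (_ : i ∈ Finset.univ) => hpt i
      rw [Finset.sum_sub_distrib, ← Finset.mul_sum] at this
      exact this
    have h2 : sB * (a2 + t * b2) + 1 = t * b1 - a1 := by linear_combination -hkey
    linarith
  have hL2up : ∑ i, (xt i)^2 ≤ (a2 + t * b2) ^ 2 := by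
    have hexp : ∑ i, (xt i)^2
        = (∑ i, (x i)^2) + 2 * t * (∑ i, x i * u i) + t^2 * (∑ i, (u i)^2) := by
      rw [hxt]
      rw [Finset.mul_sum, Finset.mul_sum, ← Finset.sum_add_distrib, ← Finset.sum_add_distrib]
      exact Finset.sum_congr rfl fun i _ => by ring
    have hcs : ∑ i, x i * u i ≤ a2 * b2 := by
      have h := Finset.sum_mul_sq_le_sq_mul_sq Finset.univ x u
      have h2 := Real.sqrt_le_sqrt h
      rw [Real.sqrt_sq_eq_abs,
        Real.sqrt_mul (Finset.sum_nonneg fun i _ => sq_nonneg (x i))] at h2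
      rw [ha2, hb2]
      exact (le_abs_self _).trans h2
    rw [hexp, ← ha2sq, ← hb2sq]
    have hts : 0 ≤ t := htpos.le
    nlinarith [mul_le_mul_of_nonneg_left hcs (by positivity : (0:ℝ) ≤ 2 * t)]
  have hL1pos : 1 ≤ ∑ i, |xt i| := by
    have : 0 ≤ sB * (a2 + t * b2) := by positivity
    linarith
  refine ⟨xt, ?_, ?_, ?_⟩
  · intro h
    rw [h] at hL1pos
    simp at hL1pos
    linarith
  · funext r
    rw [hxt]
    have : (fun i => x i + t * u i) = x + t • u := by funext i; simp
    rw [this, Matrix.mulVec_add, Matrix.mulVec_smul, hu0, smul_zero, add_zero]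
  · have hL2pos : 0 < ∑ i, (xt i)^2 := by
      by_contra hcon
      push_neg at hcon
      have hz : ∑ i, (xt i)^2 = 0 :=
        le_antisymm hcon (Finset.sum_nonneg fun i _ => sq_nonneg _)
      have : ∀ i, xt i = 0 := by
        intro i
        have := (Finset.sum_eq_zero_iff_of_nonneg
          (fun i _ => sq_nonneg (xt i))).1 hz i (Finset.mem_univ i)
        exact pow_eq_zero_iff two_ne_zero |>.1 this
      have : ∑ i, |xt i| = 0 := Finset.sum_eq_zero fun i _ => by rw [this i, abs_zero]
      linarith
    rw [le_div_iff₀ hL2pos]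
    have step1 : Bd * (∑ i, (xt i)^2) ≤ Bd * (a2 + t * b2)^2 :=
      mul_le_mul_of_nonneg_left hL2up hBpos.le
    have step2 : Bd * (a2 + t * b2)^2 = (sB * (a2 + t * b2))^2 := by
      rw [mul_pow, hsBsq]
    have step3 : (sB * (a2 + t * b2))^2 ≤ (∑ i, |xt i|)^2 := by
      have h0 : 0 ≤ sB * (a2 + t * b2) := by positivity
      exact pow_le_pow_left₀ h0 (by linarith) 2
    linarith
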